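/- Let Ω ⊆ ℂ be a connected open set, let f and a sequence (f_n) be holomorphic functions on Ω, and suppose: (i) there is a constant C > 0 with |f_n(z)| ≤ C for all n and all z ∈ Ω; (ii) there is a nonempty open subset Ω' ⊆ Ω such that f_n(z) → f(z) for every z ∈ Ω'. Then f_n → f uniformly on every compact subset of Ω. -/

import Mathlib

open Filter Metric MeasureTheory

private lemma aux_coeff_tendsto {Ω : Set ℂ}
    {f : ℂ → ℂ} {F : ℕ → ℂ → ℂ}
    (hf : DifferentiableOn ℂ f Ω) (hF : ∀ n, DifferentiableOn ℂ (F n) Ω)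
    {C : ℝ} (hbound : ∀ n, ∀ z ∈ Ω, ‖F n z‖ ≤ C)
    {b : ℂ} {ρ : ℝ} (hρ : 0 < ρ) (hsub : closedBall b ρ ⊆ Ω)
    (hconv : ∀ w ∈ sphere b ρ, Tendsto (fun n => F n w) atTop (nhds (f w))) (k : ℕ) :
    Tendsto (fun n => (cauchyPowerSeries (F n) b ρ).coeff k) atTop
      (nhds ((cauchyPowerSeries f b ρ).coeff k)) := by
  have hmemS : ∀ θ : ℝ, circleMap b ρ θ ∈ sphere b ρ := fun θ => circleMap_mem_sphere b hρ.le θ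
  have hmem : ∀ θ : ℝ, circleMap b ρ θ ∈ Ω := fun θ => hsub (sphere_subset_closedBall (hmemS θ))
  set G : (ℂ → ℂ) → ℝ → ℂ := fun g θ =>
    deriv (circleMap b ρ) θ • ((circleMap b ρ θ - b)⁻¹ ^ k •
      ((circleMap b ρ θ - b)⁻¹ • g (circleMap b ρ θ))) with hG
  have hcoeff : ∀ g : ℂ → ℂ, (cauchyPowerSeries g b ρ).coeff k
      = (2 * Real.pi * Complex.I : ℂ)⁻¹ • ∫ θ in (0)..(2 * Real.pi), G g θ := by
    intro g
    simp only [FormalMultilinearSeries.coeff, cauchyPowerSeries,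
      ContinuousMultilinearMap.mkPiRing_apply, circleIntegral, hG, Pi.one_apply,
      Finset.prod_const_one, one_smul]
  have hne : ∀ θ : ℝ, circleMap b ρ θ - b ≠ 0 := fun θ =>
    sub_ne_zero.2 (circleMap_ne_center hρ.ne')
  have hcont : ∀ g : ℂ → ℂ, ContinuousOn g Ω → Continuous (G g) := by
    intro g hg
    have h1 : Continuous fun θ => circleMap b ρ θ - b :=
      (continuous_circleMap b ρ).sub continuous_const
    have hd : Continuous (deriv (circleMap b ρ)) := by
      have hde : deriv (circleMap b ρ) = fun θ => circleMap 0 ρ θ * Complex.I :=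
        funext fun θ => deriv_circleMap b ρ θ
      rw [hde]
      exact (continuous_circleMap 0 ρ).mul continuous_const
    exact hd.smul (((h1.inv₀ hne).pow k).smul
      ((h1.inv₀ hne).smul (hg.comp_continuous (continuous_circleMap b ρ) hmem)))
  have hnorm : ∀ g : ℂ → ℂ, ∀ θ : ℝ, ‖G g θ‖ = ρ⁻¹ ^ k * ‖g (circleMap b ρ θ)‖ := by
    intro g θ
    have h2 : ‖circleMap b ρ θ - b‖ = ρ := by
      rw [circleMap_sub_center]
      simp [abs_of_pos hρ]
    simp only [hG, norm_smul, norm_pow, norm_inv, h2, deriv_circleMap, norm_mul]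
    have h3 : ‖circleMap 0 ρ θ‖ = ρ := by simp [abs_of_pos hρ]
    rw [h3]
    field_simp; simp
  have hC0 : (0:ℝ) ≤ C := le_trans (norm_nonneg _) (hbound 0 b (hsub (mem_closedBall_self hρ.le)))
  have hint : Tendsto (fun n => ∫ θ in (0)..(2 * Real.pi), G (F n) θ) atTop
      (nhds (∫ θ in (0)..(2 * Real.pi), G f θ)) := by
    apply intervalIntegral.tendsto_integral_filter_of_dominated_convergence
      (fun _ => ρ⁻¹ ^ k * C)
    · exact Eventually.of_forall fun n =>
        ((hcont (F n) (hF n).continuousOn)).aestronglyMeasurable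
    · refine Eventually.of_forall fun n => (ae_of_all _ fun θ _ => ?_)
      rw [hnorm (F n) θ]
      have := hbound n _ (hmem θ)
      gcongr
    · exact intervalIntegrable_const
    · exact ae_of_all _ fun θ _ => by
        simp only [hG]
        exact (Tendsto.const_smul (Tendsto.const_smul (Tendsto.const_smul
          (hconv _ (hmemS θ)) _) _) _)
  rw [funext fun n => hcoeff (F n), hcoeff f]
  exact hint.const_smul _

private lemma aux_series_eq {Ω : Set ℂ} (hΩ : IsOpen Ω) {g : ℂ → ℂ}
    (hg : DifferentiableOn ℂ g Ω)
    {b : ℂ} {ρ R : ℝ} (hρ : 0 < ρ) (hle : ρ ≤ R) (hsub : closedBall b R ⊆ Ω) :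
    cauchyPowerSeries g b ρ = cauchyPowerSeries g b R := by
  obtain ⟨ρ', hρ'⟩ : ∃ r : NNReal, (r : ℝ) = ρ := ⟨⟨ρ, hρ.le⟩, rfl⟩
  obtain ⟨R', hR'⟩ : ∃ r : NNReal, (r : ℝ) = R := ⟨⟨R, (hρ.trans_le hle).le⟩, rfl⟩
  subst hρ' hR'
  have h1 : HasFPowerSeriesOnBall g (cauchyPowerSeries g b ρ') b ρ' :=
    (hg.mono ((Metric.closedBall_subset_closedBall hle).trans hsub)).hasFPowerSeriesOnBall
      (by exact_mod_cast hρ)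
  have h2 : HasFPowerSeriesOnBall g (cauchyPowerSeries g b R') b R' :=
    (hg.mono hsub).hasFPowerSeriesOnBall (by exact_mod_cast hρ.trans_le hle)
  exact h1.hasFPowerSeriesAt.eq_formalMultilinearSeries h2.hasFPowerSeriesAt

private lemma aux_unif {Ω : Set ℂ} {f : ℂ → ℂ} {F : ℕ → ℂ → ℂ}
    (hf : DifferentiableOn ℂ f Ω) (hF : ∀ n, DifferentiableOn ℂ (F n) Ω)
    {C : ℝ} (hC : 0 ≤ C) (hbound : ∀ n, ∀ z ∈ Ω, ‖F n z‖ ≤ C)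
    {b : ℂ} {R r : ℝ} (hR : 0 < R) (hr0 : 0 ≤ r) (hrR : r < R)
    (hsub : closedBall b R ⊆ Ω)
    (hcoeff : ∀ k, Tendsto (fun n => (cauchyPowerSeries (F n) b R).coeff k) atTop
      (nhds ((cauchyPowerSeries f b R).coeff k))) :
    TendstoUniformlyOn F f atTop (closedBall b r) := by
  obtain ⟨R', hR'⟩ : ∃ r : NNReal, (r : ℝ) = R := ⟨⟨R, hR.le⟩, rfl⟩
  subst hR'
  have hR'0 : 0 < R' := by exact_mod_cast hR
  set c : ℕ → ℂ := fun k => (cauchyPowerSeries f b R').coeff k with hc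
  set cn : ℕ → ℕ → ℂ := fun n k => (cauchyPowerSeries (F n) b R').coeff k with hcn
  have hfb : HasFPowerSeriesOnBall f (cauchyPowerSeries f b R') b R' :=
    (hf.mono hsub).hasFPowerSeriesOnBall hR'0
  have hFb : ∀ n, HasFPowerSeriesOnBall (F n) (cauchyPowerSeries (F n) b R') b R' :=
    fun n => ((hF n).mono hsub).hasFPowerSeriesOnBall hR'0
  -- coefficient bounds
  have hbnd : ∀ (g : ℂ → ℂ), (∀ z ∈ Ω, ‖g z‖ ≤ C) → ContinuousOn g Ω →
      ∀ k, ‖(cauchyPowerSeries g b R').coeff k‖ ≤ C * ((R' : ℝ)⁻¹) ^ k := by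
    intro g hgb hgc k
    have hmem : ∀ θ : ℝ, circleMap b R' θ ∈ Ω := fun θ =>
      hsub (Metric.sphere_subset_closedBall (circleMap_mem_sphere b R'.coe_nonneg θ))
    have h1 := norm_cauchyPowerSeries_le g b R' k
    have h2 : (∫ θ in (0)..(2 * Real.pi), ‖g (circleMap b R' θ)‖)
        ≤ ∫ _ in (0)..(2 * Real.pi), C := by
      apply intervalIntegral.integral_mono_on Real.two_pi_pos.le _ intervalIntegrable_const
      · exact fun θ _ => hgb _ (hmem θ)
      · exact ((hgc.comp_continuous (continuous_circleMap b R') hmem).norm).intervalIntegrable 0 _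
    rw [intervalIntegral.integral_const, smul_eq_mul, sub_zero] at h2
    have h3 : ‖(cauchyPowerSeries g b R').coeff k‖ = ‖cauchyPowerSeries g b (R' : ℝ) k‖ :=
      FormalMultilinearSeries.norm_apply_eq_norm_coef.symm
    rw [h3]
    refine h1.trans ?_
    rw [abs_of_nonneg R'.coe_nonneg]
    have : (2 * Real.pi)⁻¹ * (∫ θ in (0)..(2 * Real.pi), ‖g (circleMap b R' θ)‖) ≤ C := by
      rw [inv_mul_le_iff₀ Real.two_pi_pos]
      exact h2
    exact mul_le_mul_of_nonneg_right this (pow_nonneg (inv_nonneg.2 R'.coe_nonneg) k)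
  have hcnb : ∀ n k, ‖cn n k‖ ≤ C * ((R' : ℝ)⁻¹) ^ k := fun n k =>
    hbnd (F n) (hbound n) (hF n).continuousOn k
  have hcb : ∀ k, ‖c k‖ ≤ C * ((R' : ℝ)⁻¹) ^ k := fun k =>
    le_of_tendsto (hcoeff k).norm (Eventually.of_forall fun n => hcnb n k)
  have hdiffb : ∀ n k, r ^ k * ‖cn n k - c k‖ ≤ 2 * C * (r / R') ^ k := by
    intro n k
    have h1 : ‖cn n k - c k‖ ≤ 2 * C * ((R' : ℝ)⁻¹) ^ k := by
      refine (norm_sub_le _ _).trans ?_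
      calc ‖cn n k‖ + ‖c k‖ ≤ C * ((R' : ℝ)⁻¹) ^ k + C * ((R' : ℝ)⁻¹) ^ k :=
            add_le_add (hcnb n k) (hcb k)
        _ = 2 * C * ((R' : ℝ)⁻¹) ^ k := by ring
    calc r ^ k * ‖cn n k - c k‖ ≤ r ^ k * (2 * C * ((R' : ℝ)⁻¹) ^ k) := by
          exact mul_le_mul_of_nonneg_left h1 (pow_nonneg hr0 k)
      _ = 2 * C * (r / R') ^ k := by rw [div_eq_mul_inv, mul_pow]; ring
  have hgeo : Summable (fun k : ℕ => 2 * C * (r / R') ^ k) := by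
    refine Summable.mul_left _ (summable_geometric_of_lt_one (div_nonneg hr0 R'.coe_nonneg) ?_)
    rw [div_lt_one (by exact_mod_cast hR'0)]
    exact hrR
  have hsummΔ : ∀ n, Summable (fun k => r ^ k * ‖cn n k - c k‖) := fun n =>
    Summable.of_nonneg_of_le
      (fun k => mul_nonneg (pow_nonneg hr0 k) (norm_nonneg _)) (hdiffb n) hgeo
  set t : ℕ → ℝ := fun n => ∑' k, r ^ k * ‖cn n k - c k‖ with ht'
  have ht : Tendsto t atTop (nhds 0) := by
    have h0 : Tendsto t atTop (nhds (∑' (_ : ℕ), (0:ℝ))) := by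
      apply tendsto_tsum_of_dominated_convergence hgeo
      · intro k
        have h1 : Tendsto (fun n => cn n k - c k) atTop (nhds 0) := by
          have h2 := (hcoeff k).sub (tendsto_const_nhds (x := c k))
          rw [sub_self] at h2
          exact h2
        simpa using (h1.norm.const_mul (r ^ k))
      · exact Eventually.of_forall fun n k => by
          rw [Real.norm_of_nonneg (mul_nonneg (pow_nonneg hr0 k) (norm_nonneg _))]
          exact hdiffb n k
    simpa using h0
  have key : ∀ n, ∀ z ∈ Metric.closedBall b r, ‖F n z - f z‖ ≤ t n := by
    intro n z hz
    have hzball : z ∈ Metric.eball b (R' : ENNReal) := by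
      rw [Metric.emetric_ball_nnreal]
      exact Metric.closedBall_subset_ball hrR hz
    have h1 : HasSum (fun k => (z - b) ^ k • cn n k) (F n z) := by
      simpa only [FormalMultilinearSeries.apply_eq_pow_smul_coeff]
        using (hFb n).hasSum_sub hzball
    have h2 : HasSum (fun k => (z - b) ^ k • c k) (f z) := by
      simpa only [FormalMultilinearSeries.apply_eq_pow_smul_coeff]
        using hfb.hasSum_sub hzball
    have h3 : HasSum (fun k => (z - b) ^ k • (cn n k - c k)) (F n z - f z) := by
      simpa only [smul_sub] using h1.sub h2
    have hzr : ‖z - b‖ ≤ r := by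
      rw [← dist_eq_norm]
      exact Metric.mem_closedBall.mp hz
    have hterm : ∀ k, ‖(z - b) ^ k • (cn n k - c k)‖ ≤ r ^ k * ‖cn n k - c k‖ := by
      intro k
      rw [norm_smul, norm_pow]
      exact mul_le_mul_of_nonneg_right (pow_le_pow_left₀ (norm_nonneg _) hzr k) (norm_nonneg _)
    have hsumm2 : Summable (fun k => ‖(z - b) ^ k • (cn n k - c k)‖) :=
      Summable.of_nonneg_of_le (fun k => norm_nonneg _) hterm (hsummΔ n)
    calc ‖F n z - f z‖ = ‖∑' k, (z - b) ^ k • (cn n k - c k)‖ := by rw [h3.tsum_eq]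
      _ ≤ ∑' k, ‖(z - b) ^ k • (cn n k - c k)‖ := norm_tsum_le_tsum_norm hsumm2
      _ ≤ t n := Summable.tsum_le_tsum hterm hsumm2 (hsummΔ n)
  rw [Metric.tendstoUniformlyOn_iff]
  intro ε hε
  filter_upwards [ht.eventually_lt_const hε] with n hn z hz
  rw [dist_comm, dist_eq_norm]
  exact lt_of_le_of_lt (key n z hz) hn



/-- **Montel-type convergence lemma.** If a sequence of holomorphic functions on a connected
open set `Ω ⊆ ℂ` is uniformly bounded on `Ω` and converges pointwise to a holomorphic function
`f` on some nonempty open subset `Ω' ⊆ Ω`, then it converges to `f` uniformly on every compact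
subset of `Ω`. -/
theorem uniformly_bounded_pointwise_limit_tendstoUniformlyOn
    (Ω : Set ℂ) (hΩopen : IsOpen Ω) (hΩconn : IsConnected Ω)
    (f : ℂ → ℂ) (F : ℕ → ℂ → ℂ)
    (hf : DifferentiableOn ℂ f Ω) (hF : ∀ n, DifferentiableOn ℂ (F n) Ω)
    (C : ℝ) (hC : 0 < C) (hbound : ∀ n, ∀ z ∈ Ω, ‖F n z‖ ≤ C)
    (Ω' : Set ℂ) (hΩ'open : IsOpen Ω') (hΩ'ne : Ω'.Nonempty) (hΩ'sub : Ω' ⊆ Ω)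
    (hconv : ∀ z ∈ Ω', Tendsto (fun n => F n z) atTop (nhds (f z))) :
    ∀ K : Set ℂ, K ⊆ Ω → IsCompact K → TendstoUniformlyOn F f atTop K := by
  have hC0 : (0:ℝ) ≤ C := hC.le
  set S : Set ℂ := {z | ∃ ε > 0, Metric.ball z ε ⊆ Ω ∧
    ∀ w ∈ Metric.ball z ε, Tendsto (fun n => F n w) atTop (nhds (f w))} with hSdef
  have hSopen : IsOpen S := by
    rw [Metric.isOpen_iff]
    rintro z ⟨ε, hε, hsub, hcv⟩
    refine ⟨ε/2, by positivity, fun w hw => ?_⟩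
    have hball : Metric.ball w (ε/2) ⊆ Metric.ball z ε := by
      apply Metric.ball_subset_ball'
      have := Metric.mem_ball.mp hw
      linarith
    exact ⟨ε/2, by positivity, hball.trans hsub, fun v hv => hcv v (hball hv)⟩
  have hclosed : closure S ∩ Ω ⊆ S := by
    rintro a ⟨haS, haΩ⟩
    obtain ⟨R, hR0, hRsub⟩ :=
      Metric.nhds_basis_closedBall.mem_iff.mp (hΩopen.mem_nhds haΩ)
    obtain ⟨bb, hbb, hbbS⟩ : (Metric.ball a (R/2) ∩ S).Nonempty :=
      mem_closure_iff.mp haS _ Metric.isOpen_ball (Metric.mem_ball_self (by positivity))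
    obtain ⟨ε, hε0, hεΩ, hεcv⟩ := hbbS
    set ρ := min (ε/2) (R/2) with hρdef
    have hρ0 : 0 < ρ := lt_min (by positivity) (by positivity)
    have hballR2 : Metric.closedBall bb (R/2) ⊆ Ω := by
      refine (Metric.closedBall_subset_closedBall' ?_).trans hRsub
      have := Metric.mem_ball.mp hbb
      linarith
    have hsphere : ∀ w ∈ Metric.sphere bb ρ, Tendsto (fun n => F n w) atTop (nhds (f w)) := by
      intro w hw
      apply hεcv
      rw [Metric.mem_ball, Metric.mem_sphere.mp hw]
      exact lt_of_le_of_lt (min_le_left _ _) (by linarith)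
    have hρΩ : Metric.closedBall bb ρ ⊆ Ω :=
      (Metric.closedBall_subset_closedBall (min_le_right _ _)).trans hballR2
    have hcoeffρ := fun k => aux_coeff_tendsto hf hF hbound hρ0 hρΩ hsphere k
    have heqf : cauchyPowerSeries f bb ρ = cauchyPowerSeries f bb (R/2) :=
      aux_series_eq hΩopen hf hρ0 (min_le_right _ _) hballR2
    have heqF : ∀ n, cauchyPowerSeries (F n) bb ρ = cauchyPowerSeries (F n) bb (R/2) :=
      fun n => aux_series_eq hΩopen (hF n) hρ0 (min_le_right _ _) hballR2
    simp only [heqf, heqF] at hcoeffρ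
    have hdlt : dist a bb < R/2 := by rw [dist_comm]; exact Metric.mem_ball.mp hbb
    have hd0 : (0:ℝ) ≤ dist a bb := dist_nonneg
    have hTU : TendstoUniformlyOn F f atTop
        (Metric.closedBall bb ((dist a bb + R/2)/2)) :=
      aux_unif hf hF hC0 hbound (by positivity) (by positivity) (by linarith) hballR2 hcoeffρ
    have hballa : Metric.ball a ((dist a bb + R/2)/2 - dist a bb)
        ⊆ Metric.closedBall bb ((dist a bb + R/2)/2) := by
      intro w hw
      have h1 : dist w a < (dist a bb + R/2)/2 - dist a bb := Metric.mem_ball.mp hw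
      have h2 : dist w bb ≤ dist w a + dist a bb := dist_triangle _ _ _
      exact Metric.mem_closedBall.mpr (by linarith)
    refine ⟨(dist a bb + R/2)/2 - dist a bb, by linarith, ?_, fun w hw => hTU.tendsto_at (hballa hw)⟩
    refine hballa.trans ((Metric.closedBall_subset_closedBall ?_).trans hballR2)
    linarith
  have hSne : (Ω ∩ S).Nonempty := by
    obtain ⟨x, hx⟩ := hΩ'ne
    obtain ⟨ε, hε0, hεsub⟩ := Metric.isOpen_iff.mp hΩ'open x hx
    exact ⟨x, hΩ'sub hx, ε, hε0, hεsub.trans hΩ'sub, fun w hw => hconv w (hεsub hw)⟩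
  have hΩS : Ω ⊆ S :=
    hΩconn.isPreconnected.subset_of_closure_inter_subset hSopen hSne hclosed
  have hconvΩ : ∀ z ∈ Ω, Tendsto (fun n => F n z) atTop (nhds (f z)) := by
    intro z hz
    obtain ⟨ε, hε0, _, hcv⟩ := hΩS hz
    exact hcv z (Metric.mem_ball_self hε0)
  have key : ∀ a ∈ Ω, ∃ δ > 0, TendstoUniformlyOn F f atTop (Metric.closedBall a δ) := by
    intro a ha
    obtain ⟨R, hR0, hRsub⟩ := Metric.nhds_basis_closedBall.mem_iff.mp (hΩopen.mem_nhds ha)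
    refine ⟨R/2, by positivity, ?_⟩
    apply aux_unif hf hF hC0 hbound hR0 (by positivity) (by linarith) hRsub
    exact fun k => aux_coeff_tendsto hf hF hbound hR0 hRsub
      (fun w hw => hconvΩ w (hRsub (Metric.sphere_subset_closedBall hw))) k
  have hTLU : TendstoLocallyUniformlyOn F f atTop Ω := by
    intro u hu x hx
    obtain ⟨δ, hδ0, hT⟩ := key x hx
    exact ⟨Metric.closedBall x δ, mem_nhdsWithin_of_mem_nhds (Metric.closedBall_mem_nhds x hδ0),
      hT u hu⟩
  exact fun K hK hKc =>
    (tendstoLocallyUniformlyOn_iff_forall_isCompact hΩopen).mp hTLU K hK hKc
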